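/- Let p be an odd prime, q = p^m, f a quadratic form on F_{q^{s₁}} with associated linearized map L_f, and b ∈ F_{q^{s₁}} with b ∉ Im(L_f). Then for every z ∈ F_q*, ∑_{x ∈ F_{q^{s₁}}} ζ_p^{Tr_p^q(z·f(x) - Tr_q^{q^{s₁}}(z·b·x))} = 0. -/

import Mathlib

open Module

lemma aux_range {K V : Type*} [Field K] [AddCommGroup V] [Module K V] [FiniteDimensional K V]
    (Φ : V →ₗ[K] Module.Dual K V) (hΦ : Function.Injective Φ)
    (T : V →ₗ[K] V) (hadj : ∀ v w, Φ (T v) w = Φ (T w) v)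
    (c : V) (hc : ∀ y, T y = 0 → Φ c y = 0) : c ∈ LinearMap.range T := by
  set N := LinearMap.ker T with hN
  have hker : LinearMap.ker (Φ ∘ₗ T) = N := by
    rw [LinearMap.ker_comp, LinearMap.ker_eq_bot.mpr hΦ, Submodule.comap_bot]
  have hle : LinearMap.range (Φ ∘ₗ T) ≤ N.dualAnnihilator := by
    rintro _ ⟨v, rfl⟩
    rw [Submodule.mem_dualAnnihilator]
    intro y hy
    have hy0 : T y = 0 := hy
    simp only [LinearMap.comp_apply]
    rw [hadj v y, hy0, map_zero, LinearMap.zero_apply]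
  have h1 : finrank K (LinearMap.range (Φ ∘ₗ T)) + finrank K N = finrank K V := by
    rw [← hker]; exact LinearMap.finrank_range_add_finrank_ker _
  have h2 : finrank K (N.dualAnnihilator) + finrank K N = finrank K V := by
    rw [(Subspace.quotEquivAnnihilator N).finrank_eq.symm]
    exact Submodule.finrank_quotient_add_finrank N
  have heq : LinearMap.range (Φ ∘ₗ T) = N.dualAnnihilator :=
    Submodule.eq_of_le_of_finrank_le hle (by omega)
  have hmem : Φ c ∈ N.dualAnnihilator := by
    rw [Submodule.mem_dualAnnihilator]; intro y hy; exact hc y hy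
  rw [← heq] at hmem
  obtain ⟨w, hw⟩ := hmem
  exact ⟨w, hΦ hw⟩

/-- For a quadratic form `f` on `F_{q^{s₁}}` with linearized map
`L_f` (so `f(x) = Tr(x L_f(x))` with symmetric polar form `Tr(x L_f(y))`) and
`b ∉ Im(L_f)`, for every `z ∈ F_q*`:
`∑_x ζ_p^{Tr_p^q(z f(x) - Tr_q^{q^{s₁}}(z b x))} = 0`. -/
theorem stmt_16 (p : ℕ) [Fact p.Prime] (hp : p ≠ 2) (F : Type*)
    [Field F] [Fintype F] [Algebra (ZMod p) F]
    (E₁ : Type*) [Field E₁] [Fintype E₁] [Algebra F E₁]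
    (f : QuadraticForm F E₁) (L : E₁ →ₗ[F] E₁)
    (hfL : ∀ x : E₁, f x = Algebra.trace F E₁ (x * L x))
    (hsym : ∀ x y : E₁, Algebra.trace F E₁ (x * L y) = Algebra.trace F E₁ (y * L x))
    (b : E₁) (hb : b ∉ LinearMap.range L) (z : F) (hz : z ≠ 0) :
    ∑ x : E₁, Complex.exp (2 * Real.pi * Complex.I / p)
        ^ (Algebra.trace (ZMod p) F
            (z * f x - Algebra.trace F E₁ (algebraMap F E₁ z * b * x))).val
      = 0 := by
  have hp0 : p ≠ 0 := (Fact.out : p.Prime).ne_zero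
  haveI : NeZero p := ⟨hp0⟩
  letI : Algebra (ZMod p) E₁ := ((algebraMap F E₁).comp (algebraMap (ZMod p) F)).toAlgebra
  haveI : IsScalarTower (ZMod p) F E₁ := IsScalarTower.of_algebraMap_eq fun x => rfl
  set zb : E₁ := algebraMap F E₁ z * b with hzb
  have tr_tr : ∀ u : E₁, Algebra.trace (ZMod p) F (Algebra.trace F E₁ u)
      = Algebra.trace (ZMod p) E₁ u := fun u => Algebra.trace_trace u
  -- Step 1: find `y` in the kernel of `L` with full trace of `zb*y` nonzero.
  have key : ∃ y : E₁, L y = 0 ∧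
      Algebra.trace (ZMod p) F (Algebra.trace F E₁ (zb * y)) ≠ 0 := by
    by_contra hcon
    push_neg at hcon
    apply hb
    have hnd : (Algebra.traceForm (ZMod p) E₁).Nondegenerate :=
      traceForm_nondegenerate (ZMod p) E₁
    have hΦ : Function.Injective (Algebra.traceForm (ZMod p) E₁) := by
      rw [← LinearMap.ker_eq_bot, Submodule.eq_bot_iff]
      intro v hv
      exact hnd.1 v fun w => by
        have h0 : (Algebra.traceForm (ZMod p) E₁) v = 0 := hv
        rw [h0]; rfl
    have hc : zb ∈ LinearMap.range (L.restrictScalars (ZMod p)) := by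
      apply aux_range (Algebra.traceForm (ZMod p) E₁) hΦ (L.restrictScalars (ZMod p))
      · intro v w
        simp only [Algebra.traceForm_apply, LinearMap.restrictScalars_apply]
        rw [← tr_tr, ← tr_tr, mul_comm (L v) w, mul_comm (L w) v]
        exact congrArg _ (hsym w v)
      · intro y hy
        rw [Algebra.traceForm_apply, ← tr_tr]
        exact hcon y hy
    obtain ⟨w, hw⟩ := hc
    refine ⟨z⁻¹ • w, ?_⟩
    have hw' : L w = zb := hw
    rw [map_smul, hw', hzb, Algebra.smul_def, ← mul_assoc, ← map_mul,
      inv_mul_cancel₀ hz, map_one, one_mul]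
  obtain ⟨y, hy0, hcne⟩ := key
  set c : ZMod p := Algebra.trace (ZMod p) F (Algebra.trace F E₁ (zb * y)) with hc
  -- Step 2: character sum manipulation.
  set ζ : ℂ := Complex.exp (2 * Real.pi * Complex.I / p) with hζdef
  have hζ : IsPrimitiveRoot ζ p := Complex.isPrimitiveRoot_exp p hp0
  have hζp : ζ ^ p = 1 := hζ.pow_eq_one
  set χ : ZMod p → ℂ := fun a => ζ ^ a.val with hχ
  have hχadd : ∀ a b : ZMod p, χ (a + b) = χ a * χ b := by
    intro a b
    calc χ (a + b) = ζ ^ ((a.val + b.val) % p) := by rw [hχ]; simp [ZMod.val_add]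
    _ = ζ ^ (a.val + b.val) := (pow_eq_pow_mod _ hζp).symm
    _ = χ a * χ b := pow_add ζ _ _
  have hχne : χ (-c) ≠ 1 := by
    have hne : (-c) ≠ 0 := neg_ne_zero.mpr hcne
    have h1 : (-c).val < p := ZMod.val_lt _
    have h2 : 0 < (-c).val :=
      Nat.pos_of_ne_zero (fun h => hne (by rwa [← ZMod.val_eq_zero]))
    exact hζ.pow_ne_one_of_pos_of_lt h2.ne' h1
  set h : E₁ → ZMod p := fun x => Algebra.trace (ZMod p) F
      (z * f x - Algebra.trace F E₁ (zb * x)) with hh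
  have hshift : ∀ x : E₁, h (x + y) = h x + (-c) := by
    intro x
    have hfxy : f (x + y) = f x := by
      rw [hfL, hfL, map_add, hy0, add_zero, add_mul, map_add,
        hsym y x, hy0, mul_zero, map_zero, add_zero]
    show Algebra.trace (ZMod p) F (z * f (x + y) - Algebra.trace F E₁ (zb * (x + y)))
        = h x + (-c)
    rw [hfxy, mul_add zb x y, map_add, ← sub_sub, map_sub, ← hc, sub_eq_add_neg]
  set S : ℂ := ∑ x : E₁, χ (h x) with hS
  have hre : S = ∑ x : E₁, χ (h (x + y)) :=
    (Fintype.sum_equiv (Equiv.addRight y) (fun x => χ (h (x + y))) (fun x => χ (h x))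
      (fun x => rfl)).symm
  have hSe : S = χ (-c) * S := by
    rw [hS, Finset.mul_sum]
    rw [show (∑ x : E₁, χ (h x)) = ∑ x : E₁, χ (h (x + y)) from hre]
    refine Finset.sum_congr rfl fun x _ => ?_
    rw [hshift x, hχadd, mul_comm]
  have hS0 : S = 0 := by
    have hfac : (1 - χ (-c)) * S = 0 := by rw [sub_mul, one_mul, ← hSe, sub_self]
    rcases mul_eq_zero.mp hfac with h' | h'
    · exact absurd (sub_eq_zero.mp h').symm hχne
    · exact h'
  exact hS0
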